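/- Let f be a transcendental entire function, let R > 0 be such that M(r, f) > r for all r ≥ R, and suppose that A_R(f) is a spider's web. Let (H_n)_{n≥0} and (L_n)_{n≥0} be the sequences of fundamental holes and loops for A_R(f). Then for every n ≥ 0, H_n contains the open disc {z ∈ ℂ : |z| < M^n(R, f)} and L_n ⊆ A_R^n(f). -/

import Mathlib

open Set Metric Topology Function Bornology

/-- The maximum modulus `M(r, f)` of `f` on the circle `|z| = r`. -/
noncomputable def maxMod (f : ℂ → ℂ) (r : ℝ) : ℝ :=
  sSup ((fun z => ‖f z‖) '' Metric.sphere (0 : ℂ) r)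

/-- `f` is a transcendental entire function: holomorphic on all of `ℂ` and not a polynomial. -/
def TranscEntire (f : ℂ → ℂ) : Prop :=
  Differentiable ℂ f ∧ ¬ ∃ p : Polynomial ℂ, ∀ z, f z = p.eval z

/-- The fast escaping set `A(f)` (with parameter `R`). -/
def fastEscaping (f : ℂ → ℂ) (R : ℝ) : Set ℂ :=
  {z | ∃ L : ℕ, ∀ n : ℕ, (maxMod f)^[n] R ≤ ‖f^[n + L] z‖}

/-- The `L`-th level `A_R^L(f)` of the fast escaping set. -/
def levelSet (f : ℂ → ℂ) (R : ℝ) (L : ℤ) : Set ℂ :=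
  {z | ∀ n : ℕ, 0 ≤ (n : ℤ) + L →
    (maxMod f)^[((n : ℤ) + L).toNat] R ≤ ‖f^[n] z‖}

/-- `E ⊆ ℂ` is an (infinite) spider's web. -/
def SpidersWeb (E : Set ℂ) : Prop :=
  IsConnected E ∧ ∃ G : ℕ → Set ℂ,
    (∀ n, IsOpen (G n) ∧ IsConnected (G n) ∧ Bornology.IsBounded (G n) ∧
      SimplyConnectedSpace (G n) ∧ G n ⊆ G (n + 1) ∧ frontier (G n) ⊆ E) ∧
    (⋃ n, G n) = Set.univ

/-- `K` is a connected component of the set `S`. -/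
def IsCompOf {X : Type*} [TopologicalSpace X] (K S : Set X) : Prop :=
  ∃ z ∈ S, K = connectedComponentIn S z

/-- The `n`-th fundamental hole for `A_R(f)`: the component of the complement of
`A_R^n(f)` containing `0`. -/
noncomputable def fundHole (f : ℂ → ℂ) (R : ℝ) (n : ℤ) : Set ℂ :=
  connectedComponentIn (levelSet f R n)ᶜ 0

/-- The `n`-th fundamental loop for `A_R(f)`. -/
noncomputable def fundLoop (f : ℂ → ℂ) (R : ℝ) (n : ℤ) : Set ℂ :=
  frontier (fundHole f R n)

/-- `H_n` contains the disc of radius `M^n(R)` and `L_n ⊆ A_R^n(f)`. -/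
theorem stmt_16 (f : ℂ → ℂ) (R : ℝ) (hf : TranscEntire f) (hR : 0 < R)
    (hM : ∀ r ≥ R, r < maxMod f r) (hweb : SpidersWeb (levelSet f R 0)) :
    ∀ n : ℕ, {z : ℂ | ‖z‖ < (maxMod f)^[n] R} ⊆ fundHole f R n ∧
      fundLoop f R n ⊆ levelSet f R n := by
  intro n
  have hcont : Continuous f := hf.1.continuous
  have hRn : ∀ m : ℕ, R ≤ (maxMod f)^[m] R := by
    intro m
    induction m with
    | zero => simp
    | succ k ih =>
      rw [Function.iterate_succ_apply']
      exact ih.trans (hM _ ih).le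
  have hclosed : IsClosed (levelSet f R (n : ℤ)) := by
    have heq : levelSet f R (n : ℤ) = ⋂ m : ℕ, {z : ℂ | 0 ≤ (m : ℤ) + n →
        (maxMod f)^[((m : ℤ) + n).toNat] R ≤ ‖f^[m] z‖} := by
      ext z; simp [levelSet, Set.mem_iInter]
    rw [heq]
    refine isClosed_iInter fun m => ?_
    by_cases h : 0 ≤ (m : ℤ) + n
    · have : {z : ℂ | 0 ≤ (m : ℤ) + n →
          (maxMod f)^[((m : ℤ) + n).toNat] R ≤ ‖f^[m] z‖} =
          {z : ℂ | (maxMod f)^[((m : ℤ) + n).toNat] R ≤ ‖f^[m] z‖} := by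
        ext z; simp [h]
      rw [this]
      exact isClosed_le continuous_const (continuous_norm.comp (hcont.iterate m))
    · have : {z : ℂ | 0 ≤ (m : ℤ) + n →
          (maxMod f)^[((m : ℤ) + n).toNat] R ≤ ‖f^[m] z‖} = Set.univ := by
        ext z; simp [h]
      rw [this]; exact isClosed_univ
  have hU : IsOpen (levelSet f R (n : ℤ))ᶜ := hclosed.isOpen_compl
  have hdisc : {z : ℂ | ‖z‖ < (maxMod f)^[n] R} ⊆ (levelSet f R (n : ℤ))ᶜ := by
    intro z hz hzin
    have h0 := hzin 0 (by positivity)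
    simp only [Nat.cast_zero, zero_add, Int.toNat_natCast, Function.iterate_zero_apply] at h0
    exact absurd hz (not_lt.mpr h0)
  have h0mem : (0 : ℂ) ∈ {z : ℂ | ‖z‖ < (maxMod f)^[n] R} := by
    simp only [Set.mem_setOf_eq, norm_zero]
    exact lt_of_lt_of_le hR (hRn n)
  have hdisceq : {z : ℂ | ‖z‖ < (maxMod f)^[n] R} = Metric.ball (0 : ℂ) ((maxMod f)^[n] R) := by
    ext z; simp [Metric.mem_ball, Complex.dist_eq]
  have hconn : IsPreconnected {z : ℂ | ‖z‖ < (maxMod f)^[n] R} := by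
    rw [hdisceq]
    exact (convex_ball _ _).isPreconnected
  have hsub : {z : ℂ | ‖z‖ < (maxMod f)^[n] R} ⊆ fundHole f R n :=
    hconn.subset_connectedComponentIn h0mem hdisc
  refine ⟨hsub, ?_⟩
  intro x hx
  by_contra hxnot
  have hxU : x ∈ (levelSet f R (n : ℤ))ᶜ := hxnot
  have hHopen : IsOpen (fundHole f R n) := hU.connectedComponentIn
  have hV : IsOpen (connectedComponentIn (levelSet f R (n : ℤ))ᶜ x) := hU.connectedComponentIn
  have hxV : x ∈ connectedComponentIn (levelSet f R (n : ℤ))ᶜ x := mem_connectedComponentIn hxU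
  have hxc : x ∈ closure (fundHole f R n) := hx.1
  obtain ⟨y, hyV, hyH⟩ := mem_closure_iff.mp hxc _ hV hxV
  have h1 := connectedComponentIn_eq hyV
  have h2 := connectedComponentIn_eq hyH
  have hxH : x ∈ fundHole f R n := by
    have : fundHole f R n = connectedComponentIn (levelSet f R (n : ℤ))ᶜ x := by
      rw [fundHole] at hyH ⊢
      rw [h2, ← h1]
    rw [this]; exact hxV
  rw [fundLoop, hHopen.frontier_eq] at hx
  exact hx.2 hxH
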